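/- For every n ≥ 1, the number of alternating permutations of {1,…,n} beginning with an ascent equals the number of alternating permutations of {1,…,n} in the 'reverse' sense beginning with a descent (a₁ > a₂ < a₃ > ⋯); equivalently, E_n satisfies the recurrence 2·E_{n+1} = ∑_{k=0}^{n} C(n,k)·E_k·E_{n-k} for n ≥ 1, with E₀ = E₁ = 1. -/

import Mathlib

/-!
STATEMENT 15: For every n ≥ 1, the number of alternating permutations of {1,…,n}
(beginning with an ascent) equals the number of reverse alternating permutations of
{1,…,n} (beginning with a descent); equivalently, the Euler zigzag numbers E_n satisfy
2·E_{n+1} = ∑_{k=0}^{n} C(n,k)·E_k·E_{n-k} for n ≥ 1, with E₀ = E₁ = 1.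
-/

/-- `w` is an alternating word: w₁ < w₂ > w₃ < w₄ > ⋯ (positions 0-indexed). -/
def IsAlternatingWord (w : List ℕ) : Prop :=
  ∀ k, k + 1 < w.length →
    (Even k → w.getD k 0 < w.getD (k + 1) 0) ∧ (Odd k → w.getD (k + 1) 0 < w.getD k 0)

/-- `w` is a reverse alternating word: w₁ > w₂ < w₃ > w₄ < ⋯. -/
def IsRevAlternatingWord (w : List ℕ) : Prop :=
  ∀ k, k + 1 < w.length →
    (Even k → w.getD (k + 1) 0 < w.getD k 0) ∧ (Odd k → w.getD k 0 < w.getD (k + 1) 0)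

/-- The Euler zigzag number `E n`: the number of alternating permutations of {1,…,n}. -/
noncomputable def eulerE (n : ℕ) : ℕ :=
  Nat.card {w : List ℕ // w.Perm (List.range' 1 n) ∧ IsAlternatingWord w}

instance : DecidablePred IsAlternatingWord := fun w =>
  decidable_of_iff (∀ k < w.length, k + 1 < w.length →
    (Even k → w.getD k 0 < w.getD (k + 1) 0) ∧ (Odd k → w.getD (k + 1) 0 < w.getD k 0))
    ⟨fun h k hk => h k (by omega) hk, fun h k _ hk => h k hk⟩

instance : DecidablePred IsRevAlternatingWord := fun w =>
  decidable_of_iff (∀ k < w.length, k + 1 < w.length →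
    (Even k → w.getD (k + 1) 0 < w.getD k 0) ∧ (Odd k → w.getD k 0 < w.getD (k + 1) 0))
    ⟨fun h k hk => h k (by omega) hk, fun h k _ hk => h k hk⟩

noncomputable def altSet (l : List ℕ) : Finset (List ℕ) :=
  l.permutations.toFinset.filter IsAlternatingWord

noncomputable def revSet (l : List ℕ) : Finset (List ℕ) :=
  l.permutations.toFinset.filter IsRevAlternatingWord

lemma mem_altSet {l w : List ℕ} : w ∈ altSet l ↔ w.Perm l ∧ IsAlternatingWord w := by
  simp [altSet, List.mem_permutations]

lemma mem_revSet {l w : List ℕ} : w ∈ revSet l ↔ w.Perm l ∧ IsRevAlternatingWord w := by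
  simp [revSet, List.mem_permutations]

lemma natCard_filter (l : List ℕ) (P : List ℕ → Prop) [DecidablePred P] :
    Nat.card {w : List ℕ // w.Perm l ∧ P w} = (l.permutations.toFinset.filter P).card := by
  rw [← Nat.card_eq_finsetCard]
  exact Nat.card_congr (Equiv.subtypeEquivRight (by
    intro w; simp [List.mem_permutations, and_comm]))

lemma eulerE_eq (n : ℕ) : eulerE n = (altSet (List.range' 1 n)).card :=
  natCard_filter _ _
lemma getD_map_lt (w : List ℕ) (f : ℕ → ℕ) {k : ℕ} (hk : k < w.length) :
    (w.map f).getD k 0 = f (w.getD k 0) := by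
  rw [List.getD_eq_getElem _ _ (by simpa using hk), List.getD_eq_getElem _ _ hk,
    List.getElem_map]

lemma getD_mem_lt (w : List ℕ) {k : ℕ} (hk : k < w.length) : w.getD k 0 ∈ w := by
  rw [List.getD_eq_getElem _ _ hk]; exact List.getElem_mem _

lemma isAlt_map {w : List ℕ} {f : ℕ → ℕ}
    (hf : ∀ x ∈ w, ∀ y ∈ w, x < y → f x < f y) (h : IsAlternatingWord w) :
    IsAlternatingWord (w.map f) := by
  intro k hk
  rw [List.length_map] at hk
  rw [getD_map_lt _ _ (by omega), getD_map_lt _ _ (by omega)]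
  have h1 := getD_mem_lt w (show k < w.length by omega)
  have h2 := getD_mem_lt w (show k + 1 < w.length by omega)
  obtain ⟨he, ho⟩ := h k hk
  exact ⟨fun hEv => hf _ h1 _ h2 (he hEv), fun hOd => hf _ h2 _ h1 (ho hOd)⟩

lemma isRev_map {w : List ℕ} {f : ℕ → ℕ}
    (hf : ∀ x ∈ w, ∀ y ∈ w, x < y → f x < f y) (h : IsRevAlternatingWord w) :
    IsRevAlternatingWord (w.map f) := by
  intro k hk
  rw [List.length_map] at hk
  rw [getD_map_lt _ _ (by omega), getD_map_lt _ _ (by omega)]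
  have h1 := getD_mem_lt w (show k < w.length by omega)
  have h2 := getD_mem_lt w (show k + 1 < w.length by omega)
  obtain ⟨he, ho⟩ := h k hk
  exact ⟨fun hEv => hf _ h2 _ h1 (he hEv), fun hOd => hf _ h1 _ h2 (ho hOd)⟩

lemma isAlt_map_anti {w : List ℕ} {f : ℕ → ℕ}
    (hf : ∀ x ∈ w, ∀ y ∈ w, x < y → f y < f x) (h : IsAlternatingWord w) :
    IsRevAlternatingWord (w.map f) := by
  intro k hk
  rw [List.length_map] at hk
  rw [getD_map_lt _ _ (by omega), getD_map_lt _ _ (by omega)]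
  have h1 := getD_mem_lt w (show k < w.length by omega)
  have h2 := getD_mem_lt w (show k + 1 < w.length by omega)
  obtain ⟨he, ho⟩ := h k hk
  exact ⟨fun hEv => hf _ h1 _ h2 (he hEv), fun hOd => hf _ h2 _ h1 (ho hOd)⟩

lemma isRev_map_anti {w : List ℕ} {f : ℕ → ℕ}
    (hf : ∀ x ∈ w, ∀ y ∈ w, x < y → f y < f x) (h : IsRevAlternatingWord w) :
    IsAlternatingWord (w.map f) := by
  intro k hk
  rw [List.length_map] at hk
  rw [getD_map_lt _ _ (by omega), getD_map_lt _ _ (by omega)]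
  have h1 := getD_mem_lt w (show k < w.length by omega)
  have h2 := getD_mem_lt w (show k + 1 < w.length by omega)
  obtain ⟨he, ho⟩ := h k hk
  exact ⟨fun hEv => hf _ h2 _ h1 (he hEv), fun hOd => hf _ h1 _ h2 (ho hOd)⟩

lemma map_injOn_list {f : ℕ → ℕ} {l : List ℕ}
    (hf : ∀ x ∈ l, ∀ y ∈ l, f x = f y → x = y) :
    ∀ {w w' : List ℕ}, (∀ x ∈ w, x ∈ l) → (∀ x ∈ w', x ∈ l) →
      w.map f = w'.map f → w = w' := by
  intro w
  induction w with
  | nil => intro w' _ _ h; simpa using (List.map_eq_nil_iff.mp h.symm)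
  | cons a t ih =>
    intro w' hw hw' h
    cases w' with
    | nil => simp at h
    | cons b t' =>
      simp only [List.map_cons, List.cons.injEq] at h
      have : a = b := hf a (hw a (by simp)) b (hw' b (by simp)) h.1
      rw [this, ih (fun x hx => hw x (by simp [hx])) (fun x hx => hw' x (by simp [hx])) h.2]

lemma card_le_alt {l₁ l₂ : List ℕ} {f : ℕ → ℕ}
    (hperm : (l₁.map f).Perm l₂) (hmono : ∀ x ∈ l₁, ∀ y ∈ l₁, x < y → f x < f y) :
    (altSet l₁).card ≤ (altSet l₂).card := by
  apply Finset.card_le_card_of_injOn (fun w => w.map f)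
  · intro w hw
    rw [Finset.mem_coe, mem_altSet] at hw ⊢
    have hsub : ∀ x ∈ w, x ∈ l₁ := fun x hx => (hw.1.mem_iff).1 hx
    exact ⟨(hw.1.map f).trans hperm,
      isAlt_map (fun x hx y hy => hmono x (hsub x hx) y (hsub y hy)) hw.2⟩
  · intro w hw w' hw' h
    rw [Finset.mem_coe, mem_altSet] at hw hw'
    exact map_injOn_list
      (fun x hx y hy hxy => by
        rcases lt_trichotomy x y with h' | h' | h'
        · exact absurd hxy (hmono x hx y hy h').ne
        · exact h'
        · exact absurd hxy.symm (hmono y hy x hx h').ne)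
      (fun x hx => (hw.1.mem_iff).1 hx) (fun x hx => (hw'.1.mem_iff).1 hx) h

lemma card_le_alt_rev {l₁ l₂ : List ℕ} {f : ℕ → ℕ}
    (hperm : (l₁.map f).Perm l₂) (hmono : ∀ x ∈ l₁, ∀ y ∈ l₁, x < y → f y < f x) :
    (altSet l₁).card ≤ (revSet l₂).card := by
  apply Finset.card_le_card_of_injOn (fun w => w.map f)
  · intro w hw
    rw [Finset.mem_coe, mem_altSet] at hw
    rw [Finset.mem_coe, mem_revSet]
    have hsub : ∀ x ∈ w, x ∈ l₁ := fun x hx => (hw.1.mem_iff).1 hx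
    exact ⟨(hw.1.map f).trans hperm,
      isAlt_map_anti (fun x hx y hy => hmono x (hsub x hx) y (hsub y hy)) hw.2⟩
  · intro w hw w' hw' h
    rw [Finset.mem_coe, mem_altSet] at hw hw'
    exact map_injOn_list
      (fun x hx y hy hxy => by
        rcases lt_trichotomy x y with h' | h' | h'
        · exact absurd hxy.symm (hmono x hx y hy h').ne
        · exact h'
        · exact absurd hxy (hmono y hy x hx h').ne)
      (fun x hx => (hw.1.mem_iff).1 hx) (fun x hx => (hw'.1.mem_iff).1 hx) h

lemma card_le_rev_alt {l₁ l₂ : List ℕ} {f : ℕ → ℕ}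
    (hperm : (l₁.map f).Perm l₂) (hmono : ∀ x ∈ l₁, ∀ y ∈ l₁, x < y → f y < f x) :
    (revSet l₁).card ≤ (altSet l₂).card := by
  apply Finset.card_le_card_of_injOn (fun w => w.map f)
  · intro w hw
    rw [Finset.mem_coe, mem_revSet] at hw
    rw [Finset.mem_coe, mem_altSet]
    have hsub : ∀ x ∈ w, x ∈ l₁ := fun x hx => (hw.1.mem_iff).1 hx
    exact ⟨(hw.1.map f).trans hperm,
      isRev_map_anti (fun x hx y hy => hmono x (hsub x hx) y (hsub y hy)) hw.2⟩
  · intro w hw w' hw' h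
    rw [Finset.mem_coe, mem_revSet] at hw hw'
    exact map_injOn_list
      (fun x hx y hy hxy => by
        rcases lt_trichotomy x y with h' | h' | h'
        · exact absurd hxy.symm (hmono x hx y hy h').ne
        · exact h'
        · exact absurd hxy (hmono y hy x hx h').ne)
      (fun x hx => (hw.1.mem_iff).1 hx) (fun x hx => (hw'.1.mem_iff).1 hx) h

/-- The complement map gives `|altSet| = |revSet|` for `[1..n]`. -/
lemma altSet_card_eq_revSet_card (n : ℕ) :
    (altSet (List.range' 1 n)).card = (revSet (List.range' 1 n)).card := by
  have hmem : ∀ x ∈ List.range' 1 n, 1 ≤ x ∧ x < 1 + n := by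
    intro x hx; exact List.mem_range'_1.mp hx
  have hperm : ((List.range' 1 n).map (fun x => n + 1 - x)).Perm (List.range' 1 n) := by
    have : (List.range' 1 n).map (fun x => n + 1 - x) = (List.range' 1 n).reverse := by
      apply List.ext_getElem
      · simp
      · intro i h1 h2
        simp only [List.getElem_map, List.getElem_reverse, List.getElem_range']
        simp only [List.length_range', List.length_map, List.length_reverse] at h1 h2 ⊢
        omega
    rw [this]
    exact List.reverse_perm _
  have hanti : ∀ x ∈ List.range' 1 n, ∀ y ∈ List.range' 1 n, x < y →
      (fun x => n + 1 - x) y < (fun x => n + 1 - x) x := by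
    intro x hx y hy hxy
    have := hmem x hx; have := hmem y hy
    simp only
    omega
  exact le_antisymm (card_le_alt_rev hperm hanti) (card_le_rev_alt hperm hanti)

/-- Relabeling along sorted lists: map of the first onto the second. -/
lemma sorted_relabel {l₁ l₂ : List ℕ} (h₁ : l₁.Pairwise (· < ·)) (h₂ : l₂.Pairwise (· < ·))
    (hlen : l₁.length = l₂.length) :
    (l₁.map (fun x => l₂.getD (l₁.idxOf x) 0) = l₂) ∧
      (∀ x ∈ l₁, ∀ y ∈ l₁, x < y →
        l₂.getD (l₁.idxOf x) 0 < l₂.getD (l₁.idxOf y) 0) := by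
  constructor
  · apply List.ext_getElem
    · simp [hlen]
    · intro i hi hi'
      simp only [List.length_map] at hi
      rw [List.getElem_map]
      rw [h₁.nodup.idxOf_getElem i hi]
      exact List.getD_eq_getElem _ _ hi'
  · intro x hx y hy hxy
    have hxl : l₁.idxOf x < l₁.length := List.idxOf_lt_length_iff.mpr hx
    have hyl : l₁.idxOf y < l₁.length := List.idxOf_lt_length_iff.mpr hy
    have hgx : l₁[l₁.idxOf x] = x := List.getElem_idxOf hxl
    have hgy : l₁[l₁.idxOf y] = y := List.getElem_idxOf hyl
    have hij : l₁.idxOf x < l₁.idxOf y := by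
      rcases lt_trichotomy (l₁.idxOf x) (l₁.idxOf y) with h | h | h
      · exact h
      · exfalso; apply hxy.ne; rw [← hgx, ← hgy]; congr 1
      · have := h₁.rel_get_of_lt (a := ⟨l₁.idxOf y, hyl⟩) (b := ⟨l₁.idxOf x, hxl⟩) h
        simp only [List.get_eq_getElem, hgx, hgy] at this
        omega
    rw [List.getD_eq_getElem _ _ (hlen ▸ hxl), List.getD_eq_getElem _ _ (hlen ▸ hyl)]
    exact h₂.rel_get_of_lt (a := ⟨_, hlen ▸ hxl⟩) (b := ⟨_, hlen ▸ hyl⟩) hij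

lemma altSet_card_sorted_eq {l₁ l₂ : List ℕ} (h₁ : l₁.Pairwise (· < ·))
    (h₂ : l₂.Pairwise (· < ·)) (hlen : l₁.length = l₂.length) :
    (altSet l₁).card = (altSet l₂).card := by
  obtain ⟨hm₁, hmono₁⟩ := sorted_relabel h₁ h₂ hlen
  obtain ⟨hm₂, hmono₂⟩ := sorted_relabel h₂ h₁ hlen.symm
  refine le_antisymm (card_le_alt ?_ hmono₁) (card_le_alt ?_ hmono₂)
  · rw [hm₁]
  · rw [hm₂]

lemma perm_sort_toFinset {l : List ℕ} (h : l.Nodup) :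
    l.Perm (l.toFinset.sort (· ≤ ·)) :=
  ((Finset.sort_perm_toList _ _).trans (List.toFinset_toList h)).symm

lemma range'_sorted_lt (a n : ℕ) : (List.range' a n).Pairwise (· < ·) := by
  simpa using List.pairwise_lt_range' (s := a) (n := n)

lemma altSet_card_finset (s : Finset ℕ) :
    (altSet (s.sort (· ≤ ·))).card = eulerE s.card := by
  rw [eulerE_eq]
  exact altSet_card_sorted_eq (Finset.sortedLT_sort s).pairwise (range'_sorted_lt 1 s.card)
    (by simp)

section Split
variable {p v : List ℕ} {m : ℕ}

lemma wlen : (p ++ m :: v).length = p.length + 1 + v.length := by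
  simp [Nat.add_comm, Nat.add_assoc]; omega

lemma e1 {i : ℕ} (h : i < p.length) : (p ++ m :: v).getD i 0 = p.getD i 0 :=
  List.getD_append _ _ _ _ h

lemma e2 : (p ++ m :: v).getD p.length 0 = m := by
  rw [List.getD_append_right _ _ _ _ le_rfl, Nat.sub_self]; rfl

lemma e3 {i : ℕ} (h : p.length < i) :
    (p ++ m :: v).getD i 0 = v.getD (i - (p.length + 1)) 0 := by
  rw [List.getD_append_right _ _ _ _ (by omega)]
  have : i - p.length = (i - (p.length + 1)) + 1 := by omega
  rw [this]; rfl

lemma er {j : ℕ} (h : j < p.length) :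
    p.reverse.getD j 0 = p.getD (p.length - 1 - j) 0 := by
  rw [List.getD_eq_getElem _ _ (by simpa using h), List.getD_eq_getElem _ _ (by omega),
    List.getElem_reverse]

lemma split_forward (hp : ∀ x ∈ p, x < m) (hv : ∀ x ∈ v, x < m)
    (hu : IsAlternatingWord p.reverse) (hva : IsAlternatingWord v) :
    (Odd p.length → IsAlternatingWord (p ++ m :: v)) ∧
      (Even p.length → IsRevAlternatingWord (p ++ m :: v)) := by
  have key : ∀ i, i + 1 < (p ++ m :: v).length →
      ((i + 1 < p.length ∧ (p.length - i) % 2 = 1 → (p ++ m :: v).getD i 0 < (p ++ m :: v).getD (i+1) 0)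
      ∧ (i + 1 < p.length ∧ (p.length - i) % 2 = 0 → (p ++ m :: v).getD (i+1) 0 < (p ++ m :: v).getD i 0)
      ∧ (i + 1 = p.length → (p ++ m :: v).getD i 0 < (p ++ m :: v).getD (i+1) 0)
      ∧ (i = p.length → (p ++ m :: v).getD (i+1) 0 < (p ++ m :: v).getD i 0)
      ∧ (p.length < i ∧ (i - p.length) % 2 = 1 → (p ++ m :: v).getD i 0 < (p ++ m :: v).getD (i+1) 0)
      ∧ (p.length < i ∧ (i - p.length) % 2 = 0 → (p ++ m :: v).getD (i+1) 0 < (p ++ m :: v).getD i 0)) := by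
    intro i hi
    rw [wlen] at hi
    refine ⟨?_, ?_, ?_, ?_, ?_, ?_⟩
    · rintro ⟨h1, h2⟩
      rw [e1 (by omega), e1 (by omega)]
      have := (hu (p.length - 2 - i) (by rw [List.length_reverse]; omega)).2
      rw [er (by omega), er (by omega)] at this
      have h3 : p.length - 1 - (p.length - 2 - i) = i + 1 := by omega
      have h4 : p.length - 1 - (p.length - 2 - i + 1) = i := by omega
      rw [h3, h4] at this
      exact this (by rw [Nat.odd_iff]; omega)
    · rintro ⟨h1, h2⟩
      rw [e1 (by omega), e1 (by omega)]
      have := (hu (p.length - 2 - i) (by rw [List.length_reverse]; omega)).1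
      rw [er (by omega), er (by omega)] at this
      have h3 : p.length - 1 - (p.length - 2 - i) = i + 1 := by omega
      have h4 : p.length - 1 - (p.length - 2 - i + 1) = i := by omega
      rw [h3, h4] at this
      exact this (by rw [Nat.even_iff]; omega)
    · intro h1
      rw [e1 (by omega), h1, e2]
      exact hp _ (getD_mem_lt _ (by omega))
    · intro h1
      subst h1
      rw [e2, e3 (by omega)]
      exact hv _ (getD_mem_lt _ (by omega))
    · rintro ⟨h1, h2⟩
      rw [e3 (by omega), e3 (by omega)]
      have h3 : i + 1 - (p.length + 1) = (i - (p.length + 1)) + 1 := by omega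
      rw [h3]
      exact (hva (i - (p.length + 1)) (by omega)).1 (by rw [Nat.even_iff]; omega)
    · rintro ⟨h1, h2⟩
      rw [e3 (by omega), e3 (by omega)]
      have h3 : i + 1 - (p.length + 1) = (i - (p.length + 1)) + 1 := by omega
      rw [h3]
      exact (hva (i - (p.length + 1)) (by omega)).2 (by rw [Nat.odd_iff]; omega)
  constructor
  · intro hodd i hi
    rw [Nat.odd_iff] at hodd
    obtain ⟨k1, k2, k3, k4, k5, k6⟩ := key i hi
    constructor
    · intro hei
      rw [Nat.even_iff] at hei
      rcases show (i + 1 < p.length ∧ (p.length - i) % 2 = 1) ∨ i + 1 = p.length ∨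
          (p.length < i ∧ (i - p.length) % 2 = 1) from by omega with h | h | h
      · exact k1 h
      · exact k3 h
      · exact k5 h
    · intro hoi
      rw [Nat.odd_iff] at hoi
      rcases show (i + 1 < p.length ∧ (p.length - i) % 2 = 0) ∨ i = p.length ∨
          (p.length < i ∧ (i - p.length) % 2 = 0) from by omega with h | h | h
      · exact k2 h
      · exact k4 h
      · exact k6 h
  · intro heven i hi
    rw [Nat.even_iff] at heven
    obtain ⟨k1, k2, k3, k4, k5, k6⟩ := key i hi
    constructor
    · intro hei
      rw [Nat.even_iff] at hei
      rcases show (i + 1 < p.length ∧ (p.length - i) % 2 = 0) ∨ i = p.length ∨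
          (p.length < i ∧ (i - p.length) % 2 = 0) from by omega with h | h | h
      · exact k2 h
      · exact k4 h
      · exact k6 h
    · intro hoi
      rw [Nat.odd_iff] at hoi
      rcases show (i + 1 < p.length ∧ (p.length - i) % 2 = 1) ∨ i + 1 = p.length ∨
          (p.length < i ∧ (i - p.length) % 2 = 1) from by omega with h | h | h
      · exact k1 h
      · exact k3 h
      · exact k5 h

lemma split_back_alt (hp : ∀ x ∈ p, x < m) (hv : ∀ x ∈ v, x < m)
    (h : IsAlternatingWord (p ++ m :: v)) :
    IsAlternatingWord p.reverse ∧ IsAlternatingWord v := by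
  have hL := wlen (p := p) (v := v) (m := m)
  have hKodd : p.length ≠ 0 → p.length % 2 = 1 := by
    intro h0
    by_contra he
    have h1 := (h (p.length - 1) (by omega)).2 (by rw [Nat.odd_iff]; omega)
    rw [show p.length - 1 + 1 = p.length from by omega, e2, e1 (by omega)] at h1
    have := hp _ (getD_mem_lt p (show p.length - 1 < p.length by omega))
    omega
  constructor
  · intro j hj
    rw [List.length_reverse] at hj
    have hodd := hKodd (by omega)
    have h1 := h (p.length - 2 - j) (by omega)
    rw [e1 (by omega), e1 (by omega)] at h1
    rw [er (by omega), er (by omega)]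
    have h4 : p.length - 2 - j + 1 = p.length - 1 - j := by omega
    have h5 : p.length - 1 - (j + 1) = p.length - 2 - j := by omega
    rw [h4] at h1
    rw [h5]
    constructor
    · intro hEj
      rw [Nat.even_iff] at hEj
      exact h1.2 (by rw [Nat.odd_iff]; omega)
    · intro hOj
      rw [Nat.odd_iff] at hOj
      exact h1.1 (by rw [Nat.even_iff]; omega)
  · intro j hj
    rcases Nat.eq_zero_or_pos p.length with h0 | h0
    · exfalso
      have h1 := (h 0 (by omega)).1 Even.zero
      have e2' := e2 (p := p) (v := v) (m := m)
      rw [h0] at e2'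
      have e3' := e3 (p := p) (v := v) (m := m) (i := 1) (by omega)
      rw [e2', e3'] at h1
      have := hv _ (getD_mem_lt v (show 1 - (p.length + 1) < v.length by omega))
      omega
    · have hodd := hKodd (by omega)
      have h1 := h (p.length + 1 + j) (by omega)
      rw [e3 (by omega), e3 (by omega)] at h1
      rw [show p.length + 1 + j - (p.length + 1) = j from by omega,
        show p.length + 1 + j + 1 - (p.length + 1) = j + 1 from by omega] at h1
      constructor
      · intro hEj
        rw [Nat.even_iff] at hEj
        exact h1.1 (by rw [Nat.even_iff]; omega)
      · intro hOj
        rw [Nat.odd_iff] at hOj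
        exact h1.2 (by rw [Nat.odd_iff]; omega)

lemma split_back_rev (hp : ∀ x ∈ p, x < m) (hv : ∀ x ∈ v, x < m)
    (h : IsRevAlternatingWord (p ++ m :: v)) :
    IsAlternatingWord p.reverse ∧ IsAlternatingWord v := by
  have hL := wlen (p := p) (v := v) (m := m)
  have hKeven : p.length % 2 = 0 := by
    rcases Nat.eq_zero_or_pos p.length with h0 | h0
    · omega
    · by_contra he
      have h1 := (h (p.length - 1) (by omega)).1 (by rw [Nat.even_iff]; omega)
      rw [show p.length - 1 + 1 = p.length from by omega, e2, e1 (by omega)] at h1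
      have := hp _ (getD_mem_lt p (show p.length - 1 < p.length by omega))
      omega
  constructor
  · intro j hj
    rw [List.length_reverse] at hj
    have h1 := h (p.length - 2 - j) (by omega)
    rw [e1 (by omega), e1 (by omega)] at h1
    rw [er (by omega), er (by omega)]
    have h4 : p.length - 2 - j + 1 = p.length - 1 - j := by omega
    have h5 : p.length - 1 - (j + 1) = p.length - 2 - j := by omega
    rw [h4] at h1
    rw [h5]
    constructor
    · intro hEj
      rw [Nat.even_iff] at hEj
      exact h1.1 (by rw [Nat.even_iff]; omega)
    · intro hOj
      rw [Nat.odd_iff] at hOj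
      exact h1.2 (by rw [Nat.odd_iff]; omega)
  · intro j hj
    have h1 := h (p.length + 1 + j) (by omega)
    rw [e3 (by omega), e3 (by omega)] at h1
    rw [show p.length + 1 + j - (p.length + 1) = j from by omega,
      show p.length + 1 + j + 1 - (p.length + 1) = j + 1 from by omega] at h1
    constructor
    · intro hEj
      rw [Nat.even_iff] at hEj
      exact h1.2 (by rw [Nat.odd_iff]; omega)
    · intro hOj
      rw [Nat.odd_iff] at hOj
      exact h1.1 (by rw [Nat.even_iff]; omega)

end Split

/- takeWhile / dropWhile helpers -/
lemma takeWhile_append_all {P : ℕ → Bool} {a c : List ℕ} {b : ℕ}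
    (ha : ∀ x ∈ a, P x) (hb : P b = false) :
    (a ++ b :: c).takeWhile P = a := by
  induction a with
  | nil => simp [List.takeWhile, hb]
  | cons x t ih =>
    have hx : P x = true := ha x (by simp)
    simp only [List.cons_append, List.takeWhile_cons, hx, if_true]
    rw [ih (fun y hy => ha y (by simp [hy]))]

lemma dropWhile_append_all {P : ℕ → Bool} {a c : List ℕ} {b : ℕ}
    (ha : ∀ x ∈ a, P x) (hb : P b = false) :
    (a ++ b :: c).dropWhile P = b :: c := by
  induction a with
  | nil => simp [List.dropWhile, hb]
  | cons x t ih =>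
    have hx : P x = true := ha x (by simp)
    simp only [List.cons_append, List.dropWhile_cons, hx, if_true]
    exact ih (fun y hy => ha y (by simp [hy]))

lemma decomp_of_mem {w : List ℕ} {m : ℕ} (h : m ∈ w) :
    w = w.takeWhile (fun x => x ≠ m) ++ m :: (w.dropWhile (fun x => x ≠ m)).tail := by
  induction w with
  | nil => simp at h
  | cons a t ih =>
    by_cases ha : a = m
    · subst ha
      simp [List.takeWhile_cons, List.dropWhile_cons]
    · have ha' : (fun x => decide (x ≠ m)) a = true := by simp [ha]
      have hm : m ∈ t := by rcases List.mem_cons.mp h with h | h; exact absurd h.symm ha; exact h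
      simp only [List.takeWhile_cons, List.dropWhile_cons, ha', if_true, decide_eq_true_eq]
      exact congrArg (a :: ·) (ih hm)

lemma perm_toFinset_eq {l₁ l₂ : List ℕ} (h : l₁.Perm l₂) : l₁.toFinset = l₂.toFinset := by
  ext x; simp [List.mem_toFinset, h.mem_iff]

lemma sorts_perm_ground {n : ℕ} {s : Finset ℕ} (hs : s ⊆ (List.range' 1 n).toFinset) :
    (s.sort (· ≤ ·) ++ ((List.range' 1 n).toFinset \ s).sort (· ≤ ·)).Perm
      (List.range' 1 n) := by
  rw [← Multiset.coe_eq_coe]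
  have h1 : (↑(s.sort (· ≤ ·) ++ ((List.range' 1 n).toFinset \ s).sort (· ≤ ·)) : Multiset ℕ)
      = s.val + ((List.range' 1 n).toFinset \ s).val := by
    rw [← Multiset.coe_add]
    rw [Finset.sort_eq, Finset.sort_eq]
  rw [h1, Finset.sdiff_val, add_tsub_cancel_of_le (Finset.val_le_iff.mpr hs),
    List.toFinset_val, (List.nodup_range' (s := 1) (n := n)).dedup]

lemma perm_ground {n : ℕ} {s : Finset ℕ} (hs : s ⊆ (List.range' 1 n).toFinset)
    {u v : List ℕ} (hu : u.Perm (s.sort (· ≤ ·)))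
    (hv : v.Perm ((((List.range' 1 n).toFinset) \ s).sort (· ≤ ·))) :
    (u.reverse ++ (n + 1) :: v).Perm (List.range' 1 (n + 1)) := by
  have h1 : (u.reverse ++ (n + 1) :: v).Perm
      (s.sort (· ≤ ·) ++ (n + 1) :: (((List.range' 1 n).toFinset) \ s).sort (· ≤ ·)) :=
    List.Perm.append ((u.reverse_perm).trans hu) (hv.cons _)
  have h2 := List.perm_middle (a := n + 1) (l₁ := s.sort (· ≤ ·))
    (l₂ := (((List.range' 1 n).toFinset) \ s).sort (· ≤ ·))
  have h3 : ((n + 1) :: (s.sort (· ≤ ·) ++ (((List.range' 1 n).toFinset) \ s).sort (· ≤ ·))).Perm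
      ((n + 1) :: List.range' 1 n) := (sorts_perm_ground hs).cons _
  have h4 : ((n + 1) :: List.range' 1 n).Perm (List.range' 1 (n + 1)) := by
    rw [List.range'_1_concat, Nat.add_comm 1 n]
    have := (List.perm_middle (a := n + 1) (l₁ := List.range' 1 n) (l₂ := [])).symm
    rw [List.append_nil] at this
    exact this
  exact ((h1.trans h2).trans h3).trans h4

lemma elems_lt {n : ℕ} {s : Finset ℕ} (hs : s ⊆ (List.range' 1 n).toFinset)
    {u : List ℕ} (hu : u.Perm (s.sort (· ≤ ·))) : ∀ x ∈ u, x < n + 1 := by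
  intro x hx
  have : x ∈ s.sort (· ≤ ·) := hu.subset hx
  have : x ∈ s := (Finset.mem_sort _).mp this
  have := List.mem_range'_1.mp (List.mem_toFinset.mp (hs this))
  omega

lemma card_T_eq (n : ℕ) :
    (altSet (List.range' 1 (n + 1)) ∪ revSet (List.range' 1 (n + 1))).card
      = ∑ s ∈ ((List.range' 1 n).toFinset).powerset,
          eulerE s.card * eulerE (n - s.card) := by
  classical
  have hS₀card : ((List.range' 1 n).toFinset).card = n := by
    rw [List.toFinset_card_of_nodup (List.nodup_range' (s := 1) (n := n)), List.length_range']
  have hsum : ∑ s ∈ ((List.range' 1 n).toFinset).powerset,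
        eulerE s.card * eulerE (n - s.card)
      = (((List.range' 1 n).toFinset).powerset.sigma
          (fun s => (altSet (s.sort (· ≤ ·))) ×ˢ
            (altSet ((((List.range' 1 n).toFinset) \ s).sort (· ≤ ·))))).card := by
    rw [Finset.card_sigma]
    apply Finset.sum_congr rfl
    intro s hs
    rw [Finset.card_product, altSet_card_finset, altSet_card_finset,
      Finset.card_sdiff_of_subset (Finset.mem_powerset.mp hs), hS₀card]
  rw [hsum]
  symm
  refine Finset.card_bij'
    (fun (x : (s : Finset ℕ) × (List ℕ × List ℕ)) _ => x.2.1.reverse ++ (n + 1) :: x.2.2)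
    (fun w _ => ⟨(w.takeWhile (fun x => x ≠ n + 1)).toFinset,
      ((w.takeWhile (fun x => x ≠ n + 1)).reverse, (w.dropWhile (fun x => x ≠ n + 1)).tail)⟩)
    ?_ ?_ ?_ ?_
  -- hi : forward maps into the union
  · rintro ⟨s, u, v⟩ hx
    rw [Finset.mem_sigma, Finset.mem_product] at hx
    have hs := Finset.mem_powerset.mp hx.1
    have hu := hx.2.1
    have hv := hx.2.2
    rw [mem_altSet] at hu hv
    have hperm := perm_ground hs hu.1 hv.1
    have hpu : ∀ x ∈ u.reverse, x < n + 1 := by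
      intro x hx'
      exact elems_lt hs hu.1 x (u.reverse_perm.subset hx')
    have hpv : ∀ x ∈ v, x < n + 1 := by
      intro x hx'
      have : x ∈ (((List.range' 1 n).toFinset) \ s).sort (· ≤ ·) := hv.1.subset hx'
      have : x ∈ ((List.range' 1 n).toFinset) \ s := (Finset.mem_sort _).mp this
      have := List.mem_range'_1.mp (List.mem_toFinset.mp (Finset.mem_sdiff.mp this).1)
      omega
    have hfor := split_forward hpu hpv (by rw [List.reverse_reverse]; exact hu.2) hv.2
    rw [Finset.mem_union]
    rcases Nat.even_or_odd u.reverse.length with he | ho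
    · exact Or.inr (mem_revSet.mpr ⟨hperm, hfor.2 he⟩)
    · exact Or.inl (mem_altSet.mpr ⟨hperm, hfor.1 ho⟩)
  -- hj : backward maps into the sigma
  · intro w hw
    have hperm : w.Perm (List.range' 1 (n + 1)) := by
      rw [Finset.mem_union] at hw
      rcases hw with h | h
      · exact (mem_altSet.mp h).1
      · exact (mem_revSet.mp h).1
    have hmmem : (n + 1) ∈ w := hperm.mem_iff.mpr (by rw [List.mem_range'_1]; omega)
    have hdec := decomp_of_mem hmmem
    have hnw : w.Nodup := (hperm.nodup_iff).mpr (List.nodup_range' (s := 1) (n := n.succ))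
    have hsplit := List.nodup_append.mp (hdec ▸ hnw)
    have hpnd : (w.takeWhile (fun x => x ≠ n + 1)).Nodup := hsplit.1
    have hvnd : ((w.dropWhile (fun x => x ≠ n + 1)).tail).Nodup :=
      (List.nodup_cons.mp hsplit.2.1).2
    have hmv : (n + 1) ∉ (w.dropWhile (fun x => x ≠ n + 1)).tail :=
      (List.nodup_cons.mp hsplit.2.1).1
    have hdisj := hsplit.2.2
    have hbnd : ∀ x ∈ w, 1 ≤ x ∧ x < n + 2 := by
      intro x hx
      have := List.mem_range'_1.mp (hperm.subset hx)
      omega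
    have hpmem : ∀ x ∈ w.takeWhile (fun x => x ≠ n + 1), x ∈ w :=
      fun x hx => (List.takeWhile_prefix _).sublist.subset hx
    have hvmem : ∀ x ∈ (w.dropWhile (fun x => x ≠ n + 1)).tail, x ∈ w := by
      intro x hx
      rw [hdec]
      exact List.mem_append_right _ (List.mem_cons_of_mem _ hx)
    have hpne : ∀ x ∈ w.takeWhile (fun x => x ≠ n + 1), x ≠ n + 1 := by
      intro x hx
      simpa using List.mem_takeWhile_imp hx
    have hplt : ∀ x ∈ w.takeWhile (fun x => x ≠ n + 1), x < n + 1 := by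
      intro x hx
      have := hbnd x (hpmem x hx)
      have := hpne x hx
      omega
    have hvlt : ∀ x ∈ (w.dropWhile (fun x => x ≠ n + 1)).tail, x < n + 1 := by
      intro x hx
      have := hbnd x (hvmem x hx)
      have : x ≠ n + 1 := fun h => hmv (h ▸ hx)
      omega
    have halt : IsAlternatingWord (w.takeWhile (fun x => x ≠ n + 1)).reverse ∧
        IsAlternatingWord ((w.dropWhile (fun x => x ≠ n + 1)).tail) := by
      rw [Finset.mem_union] at hw
      rcases hw with h | h
      · exact split_back_alt hplt hvlt (hdec ▸ (mem_altSet.mp h).2)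
      · exact split_back_rev hplt hvlt (hdec ▸ (mem_revSet.mp h).2)
    rw [Finset.mem_sigma, Finset.mem_product]
    have hssub : (w.takeWhile (fun x => x ≠ n + 1)).toFinset ⊆ (List.range' 1 n).toFinset := by
      intro x hx
      rw [List.mem_toFinset] at hx ⊢
      have h1 := hbnd x (hpmem x hx)
      have h2 := hpne x hx
      rw [List.mem_range'_1]
      omega
    have hveq : ((w.dropWhile (fun x => x ≠ n + 1)).tail).toFinset
        = (List.range' 1 n).toFinset \ (w.takeWhile (fun x => x ≠ n + 1)).toFinset := by
      ext x
      simp only [List.mem_toFinset, Finset.mem_sdiff, List.mem_range'_1]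
      constructor
      · intro hx
        refine ⟨?_, fun hc => hdisj x hc x (List.mem_cons_of_mem _ hx) rfl⟩
        have h1 := hbnd x (hvmem x hx)
        have h2 : x ≠ n + 1 := fun h => hmv (h ▸ hx)
        omega
      · rintro ⟨hx1, hx2⟩
        have hxw : x ∈ w := hperm.mem_iff.mpr (by rw [List.mem_range'_1]; omega)
        rw [hdec] at hxw
        rcases List.mem_append.mp hxw with h | h
        · exact absurd h hx2
        · rcases List.mem_cons.mp h with h | h
          · omega
          · exact h
    refine ⟨Finset.mem_powerset.mpr hssub, ?_, ?_⟩
    · rw [mem_altSet]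
      exact ⟨(List.reverse_perm _).trans (perm_sort_toFinset hpnd), halt.1⟩
    · rw [mem_altSet]
      refine ⟨(perm_sort_toFinset hvnd).trans ?_, halt.2⟩
      rw [hveq]
  -- left inverse
  · rintro ⟨s, u, v⟩ hx
    rw [Finset.mem_sigma, Finset.mem_product] at hx
    have hs := Finset.mem_powerset.mp hx.1
    have hu := hx.2.1
    have hv := hx.2.2
    rw [mem_altSet] at hu hv
    have hpu : ∀ x ∈ u.reverse, (fun x => decide (x ≠ n + 1)) x = true := by
      intro x hx'
      have := elems_lt hs hu.1 x (u.reverse_perm.subset hx')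
      simp only [decide_eq_true_eq]
      omega
    have hb : (fun x => decide (x ≠ n + 1)) (n + 1) = false := by simp
    have htake := takeWhile_append_all (c := v) hpu hb
    have hdrop := dropWhile_append_all (c := v) hpu hb
    have hsf : (u.reverse).toFinset = s := by
      rw [perm_toFinset_eq (u.reverse_perm.trans hu.1), Finset.sort_toFinset]
    simp only [htake, hdrop, List.tail_cons, List.reverse_reverse, hsf]
  -- right inverse
  · intro w hw
    have hperm : w.Perm (List.range' 1 (n + 1)) := by
      rw [Finset.mem_union] at hw
      rcases hw with h | h
      · exact (mem_altSet.mp h).1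
      · exact (mem_revSet.mp h).1
    have hmmem : (n + 1) ∈ w := hperm.mem_iff.mpr (by rw [List.mem_range'_1]; omega)
    have hdec := decomp_of_mem hmmem
    dsimp only
    rw [List.reverse_reverse]
    exact hdec.symm

lemma eulerE_zero : eulerE 0 = 1 := by
  rw [eulerE_eq]
  have : altSet (List.range' 1 0) = {[]} := by
    ext w
    rw [mem_altSet]
    simp only [List.range'_zero, List.perm_nil, Finset.mem_singleton]
    constructor
    · exact fun h => h.1
    · rintro rfl
      exact ⟨rfl, fun k hk => by simp at hk⟩
  rw [this, Finset.card_singleton]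

lemma eulerE_one : eulerE 1 = 1 := by
  rw [eulerE_eq]
  have : altSet (List.range' 1 1) = {[1]} := by
    ext w
    rw [mem_altSet]
    rw [List.range'_one, List.perm_singleton]
    simp only [Finset.mem_singleton]
    constructor
    · exact fun h => h.1
    · rintro rfl
      exact ⟨rfl, fun k hk => by simp at hk⟩
  rw [this, Finset.card_singleton]

lemma disjoint_alt_rev (n : ℕ) (hn : 1 ≤ n) :
    Disjoint (altSet (List.range' 1 (n + 1))) (revSet (List.range' 1 (n + 1))) := by
  rw [Finset.disjoint_left]
  intro w hw hw'
  obtain ⟨hperm, halt⟩ := mem_altSet.mp hw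
  obtain ⟨_, hrev⟩ := mem_revSet.mp hw'
  have hlen : w.length = n + 1 := by rw [hperm.length_eq, List.length_range']
  have h1 := (halt 0 (by omega)).1 Even.zero
  have h2 := (hrev 0 (by omega)).1 Even.zero
  omega

theorem alternating_reverse_and_recurrence :
    eulerE 0 = 1 ∧ eulerE 1 = 1 ∧
    ∀ n, 1 ≤ n →
      (eulerE n =
        Nat.card {w : List ℕ // w.Perm (List.range' 1 n) ∧ IsRevAlternatingWord w}) ∧
      2 * eulerE (n + 1) =
        ∑ k ∈ Finset.range (n + 1), Nat.choose n k * eulerE k * eulerE (n - k) := by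
  refine ⟨eulerE_zero, eulerE_one, fun n hn => ⟨?_, ?_⟩⟩
  · rw [natCard_filter, eulerE_eq]
    exact altSet_card_eq_revSet_card n
  · have hS₀card : ((List.range' 1 n).toFinset).card = n := by
      rw [List.toFinset_card_of_nodup (List.nodup_range' (s := 1) (n := n)), List.length_range']
    have h1 : 2 * eulerE (n + 1)
        = (altSet (List.range' 1 (n + 1)) ∪ revSet (List.range' 1 (n + 1))).card := by
      rw [Finset.card_union_of_disjoint (disjoint_alt_rev n hn),
        ← altSet_card_eq_revSet_card (n + 1), ← eulerE_eq, Nat.two_mul]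
    rw [h1, card_T_eq n]
    have h2 := Finset.sum_powerset_apply_card
      (fun k => eulerE k * eulerE (n - k)) (x := (List.range' 1 n).toFinset)
    rw [hS₀card] at h2
    rw [h2]
    apply Finset.sum_congr rfl
    intro k _
    rw [smul_eq_mul, Nat.mul_assoc]
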